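/- arXiv:2311.10772 — 2 statements merged into one kernel-verified Lean document; each statement's English description precedes it below -/
import Mathlib

section
/- Let A, B, C, D be four distinct points on a circle with center O and radius r, let P be the intersection of lines AB and CD and Q the intersection of lines AD and BC (both assumed to exist), and let M be the Miquel point of the quadrangle ABCD, i.e. the common point of the circumcircles of triangles PAD, PBC, QAB, QCD. Then M lies on the line PQ and the line OM is perpendicular to the line PQ. -/
/- STATEMENT 1: Let A, B, C, D be four distinct points on a circle with center O and
radius r, let P = AB ∩ CD and Q = AD ∩ BC, and let M be the Miquel point of the
quadrangle ABCD, i.e. the common point of the circumcircles of triangles PAD, PBC,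
QAB, QCD. Then M lies on the line PQ and OM ⊥ PQ.
We work in the oriented Euclidean plane, modelled by ℂ. -/

open EuclideanGeometry


lemma mem_line_iff_c (P X Y : ℂ) : P ∈ line[ℝ, X, Y] ↔ ∃ t : ℝ, P = X + (t : ℂ) * (Y - X) := by
  constructor
  · intro h
    have h' : (P - X) +ᵥ X ∈ line[ℝ, X, Y] := by simpa using h
    obtain ⟨t, ht⟩ := (vadd_left_mem_affineSpan_pair).mp h'
    refine ⟨t, ?_⟩
    have : (t : ℂ) * (Y - X) = P - X := by
      simpa [Complex.real_smul] using ht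
    linear_combination -this
  · rintro ⟨t, rfl⟩
    have := smul_vsub_vadd_mem_affineSpan_pair t X Y
    simpa [Complex.real_smul, add_comm] using this

lemma inner_c (z w : ℂ) : (inner ℝ z w : ℝ) = z.re * w.re + z.im * w.im := by
  rw [Complex.inner]; simp [Complex.mul_re]; ring

lemma dist_sq_c (z w : ℂ) : dist z w ^ 2 = (z.re - w.re) ^ 2 + (z.im - w.im) ^ 2 := by
  rw [Complex.dist_eq, Complex.sq_norm, Complex.normSq_apply]
  simp; ring

/-- Power of a point: if `X, Y` lie on the circle `(c, s)` and `P` lies on line `XY`,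
then `⟪X - P, Y - P⟫ = dist P c ^ 2 - s ^ 2`. -/
lemma power_lemma {X Y P c : ℂ} {s : ℝ} (hX : dist X c = s) (hY : dist Y c = s)
    (h : ∃ t : ℝ, P = X + (t : ℂ) * (Y - X)) :
    (inner ℝ (X - P) (Y - P) : ℝ) = dist P c ^ 2 - s ^ 2 := by
  obtain ⟨t, rfl⟩ := h
  have hX2 : dist X c ^ 2 = s ^ 2 := by rw [hX]
  have hY2 : dist Y c ^ 2 = s ^ 2 := by rw [hY]
  rw [dist_sq_c] at hX2 hY2 ⊢
  rw [inner_c]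
  simp only [Complex.add_re, Complex.add_im, Complex.mul_re, Complex.mul_im,
    Complex.sub_re, Complex.sub_im, Complex.ofReal_re, Complex.ofReal_im]
  linear_combination (t - 1) * hX2 - t * hY2

/-- A point of a circle on the chord line `XY` is `X` or `Y`. -/
lemma chord_lemma {X Y P c : ℂ} {s : ℝ} (hXY : X ≠ Y) (hX : dist X c = s) (hY : dist Y c = s)
    (hP : dist P c = s) (h : ∃ t : ℝ, P = X + (t : ℂ) * (Y - X)) :
    P = X ∨ P = Y := by
  obtain ⟨t, ht⟩ := h
  have h0 : (inner ℝ (X - P) (Y - P) : ℝ) = 0 := by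
    rw [power_lemma hX hY ⟨t, ht⟩, hP]; ring
  subst ht
  have hL : (X.re - Y.re) ^ 2 + (X.im - Y.im) ^ 2 ≠ 0 := by
    intro hc
    apply hXY
    have h1 : (X.re - Y.re) ^ 2 = 0 ∧ (X.im - Y.im) ^ 2 = 0 := by
      constructor <;> nlinarith [sq_nonneg (X.re - Y.re), sq_nonneg (X.im - Y.im)]
    apply Complex.ext <;> nlinarith [h1.1, h1.2]
  rw [inner_c] at h0
  simp only [Complex.add_re, Complex.add_im, Complex.mul_re, Complex.mul_im,
    Complex.sub_re, Complex.sub_im, Complex.ofReal_re, Complex.ofReal_im] at h0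
  have key : t * (1 - t) * ((X.re - Y.re) ^ 2 + (X.im - Y.im) ^ 2) = 0 := by
    linear_combination -h0
  rcases mul_eq_zero.mp key with h' | h'
  · rcases mul_eq_zero.mp h' with h'' | h''
    · left; subst h''; simp
    · right
      have : t = 1 := by linarith
      subst this
      apply Complex.ext <;> simp
  · exact absurd h' hL

/-- Two vectors orthogonal to a nonzero vector in ℂ are parallel. -/
lemma ortho_lemma {v z w : ℂ} (hv : v ≠ 0) (hz : z ≠ 0)
    (h1 : (inner ℝ z v : ℝ) = 0) (h2 : (inner ℝ w v : ℝ) = 0) :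
    ∃ k : ℝ, w = (k : ℂ) * z := by
  rw [inner_c] at h1 h2
  have hd : z.re * w.im - z.im * w.re = 0 := by
    have h : ¬(v.re = 0 ∧ v.im = 0) := by simpa [Complex.ext_iff] using hv
    by_cases hre : v.re = 0
    · have him : v.im ≠ 0 := fun hc => h ⟨hre, hc⟩
      have hz1 : z.im = 0 := by
        have h1' : z.im * v.im = 0 := by rw [hre] at h1; linarith
        exact (mul_eq_zero.mp h1').resolve_right him
      have hw1 : w.im = 0 := by
        have h2' : w.im * v.im = 0 := by rw [hre] at h2; linarith
        exact (mul_eq_zero.mp h2').resolve_right him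
      rw [hz1, hw1]; ring
    · have hz1 : z.re * v.re = -(z.im * v.im) := by linarith
      have hw1 : w.re * v.re = -(w.im * v.im) := by linarith
      have : (z.re * w.im - z.im * w.re) * v.re = 0 := by
        linear_combination w.im * hz1 - z.im * hw1
      exact (mul_eq_zero.mp this).resolve_right hre
  by_cases hre : z.re = 0
  · have him : z.im ≠ 0 := fun hc => hz (Complex.ext hre hc)
    have hwre : w.re = 0 := by
      have : z.im * w.re = 0 := by rw [hre] at hd; linarith
      exact (mul_eq_zero.mp this).resolve_left him
    refine ⟨w.im / z.im, ?_⟩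
    apply Complex.ext <;>
      simp [Complex.mul_re, Complex.mul_im, hre, hwre] <;> field_simp
  · refine ⟨w.re / z.re, ?_⟩
    apply Complex.ext <;> simp [Complex.mul_re, Complex.mul_im] <;> field_simp
    nlinarith [hd]

theorem miquel_point_of_cyclic_quadrangle_on_PQ_and_perp
    (A B C D O P Q M : ℂ) (r : ℝ)
    -- A, B, C, D are distinct points on the circle with center O and radius r
    (hdist : List.Pairwise (· ≠ ·) [A, B, C, D])
    (hA : dist A O = r) (hB : dist B O = r) (hC : dist C O = r) (hD : dist D O = r)
    -- no three of A, B, C, D are collinear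
    (h₁ : ¬ Collinear ℝ ({A, B, C} : Set ℂ)) (h₂ : ¬ Collinear ℝ ({A, B, D} : Set ℂ))
    (h₃ : ¬ Collinear ℝ ({A, C, D} : Set ℂ)) (h₄ : ¬ Collinear ℝ ({B, C, D} : Set ℂ))
    -- P = AB ∩ CD, Q = AD ∩ BC
    (hP₁ : P ∈ line[ℝ, A, B]) (hP₂ : P ∈ line[ℝ, C, D])
    (hQ₁ : Q ∈ line[ℝ, A, D]) (hQ₂ : Q ∈ line[ℝ, B, C])
    -- M is the Miquel point: common point of circles (PAD), (PBC), (QAB), (QCD)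
    (hM₁ : Cospherical ({P, A, D, M} : Set ℂ))
    (hM₂ : Cospherical ({P, B, C, M} : Set ℂ))
    (hM₃ : Cospherical ({Q, A, B, M} : Set ℂ))
    (hM₄ : Cospherical ({Q, C, D, M} : Set ℂ)) :
    -- conclusion: M ∈ PQ and OM ⊥ PQ
    M ∈ line[ℝ, P, Q] ∧ (inner ℝ (M - O) (Q - P) : ℝ) = 0 := by
  -- distinctness
  simp only [List.pairwise_cons, List.mem_cons, List.mem_singleton] at hdist
  obtain ⟨hAd, hBd, hCd, -⟩ := hdist
  have hAB : A ≠ B := hAd B (by simp)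
  have hAD : A ≠ D := hAd D (by simp)
  have hBC : B ≠ C := hBd C (by simp)
  have hCD : C ≠ D := hCd D (by simp)
  -- circles
  obtain ⟨c₁, r₁, hc₁⟩ := hM₁
  obtain ⟨c₂, r₂, hc₂⟩ := hM₂
  obtain ⟨c₃, r₃, hc₃⟩ := hM₃
  obtain ⟨c₄, r₄, hc₄⟩ := hM₄
  have hc₁P : dist P c₁ = r₁ := hc₁ P (by simp)
  have hc₁A : dist A c₁ = r₁ := hc₁ A (by simp)
  have hc₁D : dist D c₁ = r₁ := hc₁ D (by simp)
  have hc₁M : dist M c₁ = r₁ := hc₁ M (by simp)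
  have hc₂P : dist P c₂ = r₂ := hc₂ P (by simp)
  have hc₂B : dist B c₂ = r₂ := hc₂ B (by simp)
  have hc₂C : dist C c₂ = r₂ := hc₂ C (by simp)
  have hc₂M : dist M c₂ = r₂ := hc₂ M (by simp)
  have hc₃Q : dist Q c₃ = r₃ := hc₃ Q (by simp)
  have hc₃A : dist A c₃ = r₃ := hc₃ A (by simp)
  have hc₃B : dist B c₃ = r₃ := hc₃ B (by simp)
  have hc₃M : dist M c₃ = r₃ := hc₃ M (by simp)
  have hc₄Q : dist Q c₄ = r₄ := hc₄ Q (by simp)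
  have hc₄C : dist C c₄ = r₄ := hc₄ C (by simp)
  have hc₄D : dist D c₄ = r₄ := hc₄ D (by simp)
  have hc₄M : dist M c₄ = r₄ := hc₄ M (by simp)
  -- memberships as parametrizations
  have hP₁' := (mem_line_iff_c P A B).mp hP₁
  have hP₂' := (mem_line_iff_c P C D).mp hP₂
  have hQ₁' := (mem_line_iff_c Q A D).mp hQ₁
  have hQ₂' := (mem_line_iff_c Q B C).mp hQ₂
  -- noncollinearity consequences
  have nABC : A ∉ line[ℝ, B, C] := fun h => h₁ (collinear_insert_of_mem_affineSpan_pair h)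
  have nACD : A ∉ line[ℝ, C, D] := fun h => h₃ (collinear_insert_of_mem_affineSpan_pair h)
  have nBAD : B ∉ line[ℝ, A, D] := fun h => h₂
    ((collinear_insert_of_mem_affineSpan_pair h).subset (by intro p hp; simp at hp ⊢; tauto))
  have nBCD : B ∉ line[ℝ, C, D] := fun h => h₄ (collinear_insert_of_mem_affineSpan_pair h)
  have nCAD : C ∉ line[ℝ, A, D] := fun h => h₃
    ((collinear_insert_of_mem_affineSpan_pair h).subset (by intro p hp; simp at hp ⊢; tauto))
  have nDBC : D ∉ line[ℝ, B, C] := fun h => h₄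
    ((collinear_insert_of_mem_affineSpan_pair h).subset (by intro p hp; simp at hp ⊢; tauto))
  -- M ≠ P
  have hMP : M ≠ P := by
    intro h
    have hPc₃ : dist P c₃ = r₃ := h ▸ hc₃M
    rcases chord_lemma hAB hc₃A hc₃B hPc₃ hP₁' with h' | h'
    · exact nACD (h' ▸ hP₂)
    · exact nBCD (h' ▸ hP₂)
  -- M ≠ Q
  have hMQ : M ≠ Q := by
    intro h
    have hQc₁ : dist Q c₁ = r₁ := h ▸ hc₁M
    rcases chord_lemma hAD hc₁A hc₁D hQc₁ hQ₁' with h' | h'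
    · exact nABC (h' ▸ hQ₂)
    · exact nDBC (h' ▸ hQ₂)
  -- P ≠ Q
  have hPQ : P ≠ Q := by
    intro h
    subst h
    by_cases hPA : P = A
    · exact nABC (hPA ▸ hQ₂)
    · obtain ⟨t₁, ht₁⟩ := hP₁'
      obtain ⟨t₂, ht₂⟩ := hQ₁'
      have ht₁0 : (t₁ : ℂ) ≠ 0 := by
        intro h0
        exact hPA (by rw [ht₁, h0]; ring)
      refine nBAD ((mem_line_iff_c B A D).mpr ⟨t₂ / t₁, ?_⟩)
      push_cast
      field_simp
      linear_combination ht₂ - ht₁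
  -- c₃ ≠ c₄
  have hc34 : c₃ ≠ c₄ := by
    intro h
    have hr34 : r₃ = r₄ := by rw [← hc₃Q, ← hc₄Q, h]
    have hCc₃ : dist C c₃ = r₃ := by rw [h, hr34]; exact hc₄C
    rcases chord_lemma hBC hc₃B hCc₃ hc₃Q hQ₂' with h' | h'
    · exact nBAD (h' ▸ hQ₁)
    · exact nCAD (h' ▸ hQ₁)
  -- power equations
  have e1 : (inner ℝ (A - P) (B - P) : ℝ) = dist P O ^ 2 - r ^ 2 := power_lemma hA hB hP₁'
  have e1' : (inner ℝ (A - P) (B - P) : ℝ) = dist P c₃ ^ 2 - r₃ ^ 2 := power_lemma hc₃A hc₃B hP₁'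
  have e2 : (inner ℝ (C - P) (D - P) : ℝ) = dist P O ^ 2 - r ^ 2 := power_lemma hC hD hP₂'
  have e2' : (inner ℝ (C - P) (D - P) : ℝ) = dist P c₄ ^ 2 - r₄ ^ 2 := power_lemma hc₄C hc₄D hP₂'
  have e3 : (inner ℝ (A - Q) (D - Q) : ℝ) = dist Q O ^ 2 - r ^ 2 := power_lemma hA hD hQ₁'
  have e3' : (inner ℝ (A - Q) (D - Q) : ℝ) = dist Q c₁ ^ 2 - r₁ ^ 2 := power_lemma hc₁A hc₁D hQ₁'
  have hP3 : dist P c₃ ^ 2 - r₃ ^ 2 = dist P O ^ 2 - r ^ 2 := by rw [← e1', e1]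
  have hP4 : dist P c₄ ^ 2 - r₄ ^ 2 = dist P O ^ 2 - r ^ 2 := by rw [← e2', e2]
  have hQ1pow : dist Q c₁ ^ 2 - r₁ ^ 2 = dist Q O ^ 2 - r ^ 2 := by rw [← e3', e3]
  -- radical axis collinearity
  have hQ3s : dist Q c₃ ^ 2 = r₃ ^ 2 := by rw [hc₃Q]
  have hQ4s : dist Q c₄ ^ 2 = r₄ ^ 2 := by rw [hc₄Q]
  have hM3s : dist M c₃ ^ 2 = r₃ ^ 2 := by rw [hc₃M]
  have hM4s : dist M c₄ ^ 2 = r₄ ^ 2 := by rw [hc₄M]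
  have hQv : (inner ℝ (Q - P) (c₄ - c₃) : ℝ) = 0 := by
    rw [dist_sq_c] at hQ3s hQ4s hP3 hP4
    rw [dist_sq_c P O] at hP3 hP4
    rw [inner_c]
    simp only [Complex.sub_re, Complex.sub_im]
    linear_combination (hQ3s - hQ4s - hP3 + hP4) / 2
  have hMv : (inner ℝ (M - P) (c₄ - c₃) : ℝ) = 0 := by
    rw [dist_sq_c] at hM3s hM4s hP3 hP4
    rw [dist_sq_c P O] at hP3 hP4
    rw [inner_c]
    simp only [Complex.sub_re, Complex.sub_im]
    linear_combination (hM3s - hM4s - hP3 + hP4) / 2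
  have hv : c₄ - c₃ ≠ 0 := sub_ne_zero.mpr (Ne.symm hc34)
  have hzQP : Q - P ≠ 0 := sub_ne_zero.mpr (Ne.symm hPQ)
  obtain ⟨k, hk⟩ := ortho_lemma hv hzQP hQv hMv
  -- hk : M - P = k * (Q - P)
  have hmem : M ∈ line[ℝ, P, Q] := (mem_line_iff_c M P Q).mpr ⟨k, by linear_combination hk⟩
  refine ⟨hmem, ?_⟩
  -- k ≠ 0 and k ≠ 1
  have hk0 : (k : ℂ) ≠ 0 := by
    intro h0
    exact hMP (by have := hk; rw [h0, zero_mul] at this; linear_combination this)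
  have hk1 : (1 : ℂ) - k ≠ 0 := by
    intro h0
    have hk1' : (k : ℂ) = 1 := by linear_combination -h0
    exact hMQ (by rw [hk1', one_mul] at hk; linear_combination hk)
  -- P on line QM, Q on line PM
  have repP : ∃ u : ℝ, P = Q + (u : ℂ) * (M - Q) := by
    refine ⟨1 / (1 - k), ?_⟩
    have hMQ' : M - Q = ((1 : ℂ) - (k : ℂ)) * (P - Q) := by linear_combination hk
    push_cast
    rw [hMQ', one_div, inv_mul_cancel_left₀ hk1]
    ring
  have repQ : ∃ u : ℝ, Q = P + (u : ℂ) * (M - P) := by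
    refine ⟨1 / k, ?_⟩
    push_cast
    rw [hk, one_div, inv_mul_cancel_left₀ hk0]
    ring
  have hi : (inner ℝ (Q - P) (M - P) : ℝ) = dist P O ^ 2 - r ^ 2 := by
    rw [power_lemma hc₃Q hc₃M repP]; exact hP3
  have hii : (inner ℝ (P - Q) (M - Q) : ℝ) = dist Q O ^ 2 - r ^ 2 := by
    rw [power_lemma hc₁P hc₁M repQ]; exact hQ1pow
  rw [inner_c] at hi hii ⊢
  rw [dist_sq_c] at hi hii
  simp only [Complex.sub_re, Complex.sub_im] at hi hii ⊢
  linear_combination (hi - hii) / 2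
end

section
/- Let A, B, C, D be four distinct points on a circle with center O, with P = AB ∩ CD and Q = AD ∩ BC existing, and let R = AC ∩ BD be the intersection of the diagonals. Then the inverse R* of R with respect to the circle (the point on ray OR with OR · OR* = r²) is the Miquel point of the quadrangle ABCD, i.e. R* lies on the circumcircles of triangles PAD, PBC, QAB and QCD. -/
/- STATEMENT 2: Let A, B, C, D be four distinct points on a circle with center O and
radius r, with P = AB ∩ CD, Q = AD ∩ BC, and R = AC ∩ BD. Then the inverse R* of R in
the circle (the point on ray OR with OR · OR* = r²) is the Miquel point of ABCD:
R* lies on the circumcircles of triangles PAD, PBC, QAB and QCD.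
We work in the oriented Euclidean plane, modelled by ℂ. -/

open EuclideanGeometry ComplexConjugate


private lemma abs_eq_abs_of_mul_conj {x y : ℂ} (h : x * conj x = y * conj y) :
    ‖x‖ = ‖y‖ := by
  have h' : (Complex.normSq x : ℂ) = (Complex.normSq y : ℂ) := by
    rw [← Complex.mul_conj, ← Complex.mul_conj]; exact h
  rw [Complex.norm_def, Complex.norm_def, Complex.ofReal_inj.mp h']

private lemma line_param' {X Y Z : ℂ} (h : Z ∈ line[ℝ, X, Y]) :
    ∃ t : ℝ, Z = X + (t : ℂ) * (Y - X) := by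
  have e : (Z - X) +ᵥ X = Z := by rw [vadd_eq_add]; ring
  have h' : (Z - X) +ᵥ X ∈ line[ℝ, X, Y] := by rw [e]; exact h
  obtain ⟨t, ht⟩ := vadd_left_mem_affineSpan_pair.1 h'
  have ht' : (t : ℂ) * (Y - X) = Z - X := by
    have := ht
    rwa [vsub_eq_sub, Complex.real_smul] at this
  exact ⟨t, by rw [ht']; ring⟩

private lemma on_circle' {O X : ℂ} {r : ℝ} (h : dist X O = r) :
    (X - O) * conj (X - O) = (r : ℂ)^2 := by
  have habs : ‖X - O‖ = r := by rw [← Complex.dist_eq]; exact h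
  calc (X - O) * conj (X - O) = (Complex.normSq (X - O) : ℂ) := Complex.mul_conj _
    _ = ((‖X - O‖)^2 : ℝ) := by rw [Complex.sq_norm]
    _ = (r : ℂ)^2 := by rw [habs]; push_cast; ring

private lemma chord' {r : ℝ} {a b p : ℂ} (ha : a * conj a = (r:ℂ)^2)
    (hb : b * conj b = (r:ℂ)^2) (h : ∃ t : ℝ, p = a + (t : ℂ) * (b - a)) :
    (r:ℂ)^2 * p + a * b * conj p = (r:ℂ)^2 * (a + b) := by
  obtain ⟨t, rfl⟩ := h
  simp only [map_add, map_mul, map_sub, Complex.conj_ofReal]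
  linear_combination (1 - (t:ℂ)) * b * ha + (t:ℂ) * a * hb

private lemma chords_ne' {r : ℝ} {a b c d p : ℂ} (hr : (r:ℂ) ≠ 0)
    (E1 : (r:ℂ)^2 * p + a*b*conj p = (r:ℂ)^2*(a+b))
    (E2 : (r:ℂ)^2 * p + c*d*conj p = (r:ℂ)^2*(c+d))
    (hca : c ≠ a) (hcb : c ≠ b) : a*b - c*d ≠ 0 := by
  intro h
  have hsum : a + b = c + d := by
    have h2 : (r:ℂ)^2*(a+b) = (r:ℂ)^2*(c+d) := by
      linear_combination (E2 - E1) + conj p * h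
    exact mul_left_cancel₀ (pow_ne_zero 2 hr) h2
  have hq : (c - a)*(c - b) = 0 := by linear_combination (-c) * hsum + h
  rcases mul_eq_zero.mp hq with h' | h'
  · exact hca (sub_eq_zero.mp h')
  · exact hcb (sub_eq_zero.mp h')

private lemma circle4' (r : ℝ) (u v w z p m : ℂ)
    (hr : (r:ℂ) ≠ 0)
    (hu : u * conj u = (r:ℂ)^2) (hv : v * conj v = (r:ℂ)^2)
    (hw : w * conj w = (r:ℂ)^2) (hz : z * conj z = (r:ℂ)^2)
    (h1 : u*v - w*z ≠ 0) (h2 : u + w - v - z ≠ 0)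
    (h3 : v*z*(u+w) - u*w*(v+z) ≠ 0)
    (hp1 : p * (u*v - w*z) = u*v*(w+z) - w*z*(u+v))
    (hp2 : conj p * (u*v - w*z) = (r:ℂ)^2*(u+v-w-z))
    (hm1 : m * (u + w - v - z) = u*w - v*z)
    (hm2 : conj m * (v*z*(u+w) - u*w*(v+z)) = (r:ℂ)^2*(v*z - u*w)) :
    ∃ ω : ℂ, ‖p - ω‖ = ‖u - ω‖ ∧
      ‖z - ω‖ = ‖u - ω‖ ∧
      ‖m - ω‖ = ‖u - ω‖ := by
  have hr2 : (r:ℂ)^2 ≠ 0 := pow_ne_zero 2 hr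
  have hu0 : u ≠ 0 := left_ne_zero_of_mul (hu ▸ hr2)
  have hv0 : v ≠ 0 := left_ne_zero_of_mul (hv ▸ hr2)
  have hw0 : w ≠ 0 := left_ne_zero_of_mul (hw ▸ hr2)
  have hz0 : z ≠ 0 := left_ne_zero_of_mul (hz ▸ hr2)
  have hcu : conj u = (r:ℂ)^2 / u := by rw [eq_div_iff hu0]; linear_combination hu
  have hcv : conj v = (r:ℂ)^2 / v := by rw [eq_div_iff hv0]; linear_combination hv
  have hcw : conj w = (r:ℂ)^2 / w := by rw [eq_div_iff hw0]; linear_combination hw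
  have hcz : conj z = (r:ℂ)^2 / z := by rw [eq_div_iff hz0]; linear_combination hz
  have hpe : p = (u*v*(w+z) - w*z*(u+v)) / (u*v - w*z) := by rw [eq_div_iff h1]; exact hp1
  have hcp : conj p = (r:ℂ)^2*(u+v-w-z) / (u*v - w*z) := by rw [eq_div_iff h1]; exact hp2
  have hme : m = (u*w - v*z) / (u + w - v - z) := by rw [eq_div_iff h2]; exact hm1
  have hcm : conj m = (r:ℂ)^2*(v*z - u*w) / (v*z*(u+w) - u*w*(v+z)) := by
    rw [eq_div_iff h3]; exact hm2
  set ω : ℂ := u*z*(v-w) / (u*v - w*z) with hω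
  have hn : w*z - u*v ≠ 0 := fun hx => h1 (by linear_combination -hx)
  have hcω : conj ω = (r:ℂ)^2*(v-w) / (u*v - w*z) := by
    rw [hω, map_div₀, map_mul, map_mul, map_sub, map_sub, map_mul, map_mul,
      hcu, hcv, hcw, hcz]
    rw [div_eq_div_iff ?_ h1]
    · field_simp
      ring
    · have : (r:ℂ)^2/u*((r:ℂ)^2/v) - (r:ℂ)^2/w*((r:ℂ)^2/z)
          = (r:ℂ)^4*(w*z-u*v) / (u*v*w*z) := by field_simp
      rw [this]
      exact div_ne_zero (mul_ne_zero (pow_ne_zero 4 hr) hn)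
        (by exact mul_ne_zero (mul_ne_zero (mul_ne_zero hu0 hv0) hw0) hz0)
  refine ⟨ω, ?_, ?_, ?_⟩ <;> apply abs_eq_abs_of_mul_conj
  · rw [map_sub, map_sub, hcp, hcu, hcω, hpe, hω]
    field_simp
    ring
  · rw [map_sub, map_sub, hcz, hcu, hcω, hω]
    field_simp
  · rw [map_sub, map_sub, hcm, hcu, hcω, hme, hω]
    field_simp
    ring


theorem inverse_of_diagonal_point_is_miquel_point
    (A B C D O P Q R : ℂ) (r : ℝ)
    -- A, B, C, D are distinct points on the circle with center O and radius r
    (hdist : List.Pairwise (· ≠ ·) [A, B, C, D])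
    (hA : dist A O = r) (hB : dist B O = r) (hC : dist C O = r) (hD : dist D O = r)
    -- no three of A, B, C, D are collinear
    (h₁ : ¬ Collinear ℝ ({A, B, C} : Set ℂ)) (h₂ : ¬ Collinear ℝ ({A, B, D} : Set ℂ))
    (h₃ : ¬ Collinear ℝ ({A, C, D} : Set ℂ)) (h₄ : ¬ Collinear ℝ ({B, C, D} : Set ℂ))
    -- P = AB ∩ CD, Q = AD ∩ BC, R = AC ∩ BD
    (hP₁ : P ∈ line[ℝ, A, B]) (hP₂ : P ∈ line[ℝ, C, D])
    (hQ₁ : Q ∈ line[ℝ, A, D]) (hQ₂ : Q ∈ line[ℝ, B, C])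
    (hR₁ : R ∈ line[ℝ, A, C]) (hR₂ : R ∈ line[ℝ, B, D])
    (hRO : R ≠ O) :
    -- conclusion: the inverse of R in the circle lies on the four circumcircles
    Cospherical ({P, A, D, EuclideanGeometry.inversion O r R} : Set ℂ) ∧
    Cospherical ({P, B, C, EuclideanGeometry.inversion O r R} : Set ℂ) ∧
    Cospherical ({Q, A, B, EuclideanGeometry.inversion O r R} : Set ℂ) ∧
    Cospherical ({Q, C, D, EuclideanGeometry.inversion O r R} : Set ℂ) := by
  -- distinctness
  simp only [List.pairwise_cons, List.mem_cons, List.mem_singleton,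
    List.not_mem_nil] at hdist
  obtain ⟨hd1, hd2, hd3⟩ := hdist
  have hAB : A ≠ B := hd1 B (by simp)
  have hAC : A ≠ C := hd1 C (by simp)
  have hAD : A ≠ D := hd1 D (by simp)
  have hBC : B ≠ C := hd2 C (by simp)
  have hBD : B ≠ D := hd2 D (by simp)
  have hCD : C ≠ D := hd3.1 D (by simp)
  clear hd1 hd2 hd3 h₁ h₂ h₃ h₄
  -- r nonzero
  have hr' : r ≠ 0 := by
    intro h
    apply hAB
    have hA' : A = O := by rwa [h, dist_eq_zero] at hA
    have hB' : B = O := by rwa [h, dist_eq_zero] at hB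
    rw [hA', hB']
  have hr : (r:ℂ) ≠ 0 := Complex.ofReal_ne_zero.mpr hr'
  have hr2 : (r:ℂ)^2 ≠ 0 := pow_ne_zero 2 hr
  -- translated points
  set a := A - O with ha_def
  set b := B - O with hb_def
  set c := C - O with hc_def
  set d := D - O with hd_def
  have ha : a * conj a = (r:ℂ)^2 := on_circle' hA
  have hb : b * conj b = (r:ℂ)^2 := on_circle' hB
  have hc : c * conj c = (r:ℂ)^2 := on_circle' hC
  have hd : d * conj d = (r:ℂ)^2 := on_circle' hD
  -- translated distinctness
  have nAB : a ≠ b := fun h => hAB (by have := sub_left_inj.mp h; exact this)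
  have nAC : a ≠ c := fun h => hAC (sub_left_inj.mp h)
  have nAD : a ≠ d := fun h => hAD (sub_left_inj.mp h)
  have nBC : b ≠ c := fun h => hBC (sub_left_inj.mp h)
  have nBD : b ≠ d := fun h => hBD (sub_left_inj.mp h)
  have nCD : c ≠ d := fun h => hCD (sub_left_inj.mp h)
  -- chord equations
  have tr : ∀ X Y Z : ℂ, Z ∈ line[ℝ, X, Y] →
      ∃ t : ℝ, Z - O = (X - O) + (t : ℂ) * ((Y - O) - (X - O)) := by
    intro X Y Z h
    obtain ⟨t, ht⟩ := line_param' h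
    exact ⟨t, by rw [ht]; ring⟩
  have E1 : (r:ℂ)^2 * (P - O) + a * b * conj (P - O) = (r:ℂ)^2 * (a + b) :=
    chord' ha hb (tr A B P hP₁)
  have E2 : (r:ℂ)^2 * (P - O) + c * d * conj (P - O) = (r:ℂ)^2 * (c + d) :=
    chord' hc hd (tr C D P hP₂)
  have E3 : (r:ℂ)^2 * (Q - O) + a * d * conj (Q - O) = (r:ℂ)^2 * (a + d) :=
    chord' ha hd (tr A D Q hQ₁)
  have E4 : (r:ℂ)^2 * (Q - O) + b * c * conj (Q - O) = (r:ℂ)^2 * (b + c) :=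
    chord' hb hc (tr B C Q hQ₂)
  have E5 : (r:ℂ)^2 * (R - O) + a * c * conj (R - O) = (r:ℂ)^2 * (a + c) :=
    chord' ha hc (tr A C R hR₁)
  have E6 : (r:ℂ)^2 * (R - O) + b * d * conj (R - O) = (r:ℂ)^2 * (b + d) :=
    chord' hb hd (tr B D R hR₂)
  -- product pair nonzero
  have n1 : a*b - c*d ≠ 0 := chords_ne' hr E1 E2 nAC.symm nBC.symm
  have n2 : a*d - b*c ≠ 0 := chords_ne' hr E3 E4 nAB.symm nBD
  have n3 : a*c - b*d ≠ 0 := chords_ne' hr E5 E6 nAB.symm nBC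
  -- solved forms for P and Q
  have hp1 : (P - O) * (a*b - c*d) = a*b*(c+d) - c*d*(a+b) := by
    refine mul_left_cancel₀ hr2 ?_
    linear_combination a*b*E2 - c*d*E1
  have hp2 : conj (P - O) * (a*b - c*d) = (r:ℂ)^2*(a+b-c-d) := by
    linear_combination E1 - E2
  have hq1 : (Q - O) * (a*d - b*c) = a*d*(b+c) - b*c*(a+d) := by
    refine mul_left_cancel₀ hr2 ?_
    linear_combination a*d*E4 - b*c*E3
  have hq2 : conj (Q - O) * (a*d - b*c) = (r:ℂ)^2*(a+d-b-c) := by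
    linear_combination E3 - E4
  -- facts about R
  have hR'0 : R - O ≠ 0 := sub_ne_zero.mpr hRO
  have hcR'0 : conj (R - O) ≠ 0 := by
    intro h
    exact hR'0 (by simpa using congrArg (starRingEnd ℂ) h)
  have hconjR : conj (R - O) * (a*c - b*d) = (r:ℂ)^2*(a+c-b-d) := by
    linear_combination E5 - E6
  have hRval : (R - O) * (a*c - b*d) = a*c*(b+d) - b*d*(a+c) := by
    refine mul_left_cancel₀ hr2 ?_
    linear_combination a*c*E6 - b*d*E5
  have hsum_ne : a + c - b - d ≠ 0 := by
    intro h
    apply hcR'0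
    have h0 : conj (R - O) * (a*c - b*d) = 0 := by rw [hconjR, h, mul_zero]
    exact (mul_eq_zero.mp h0).resolve_right n3
  have hden3 : b*d*(a+c) - a*c*(b+d) ≠ 0 := by
    intro h
    apply hR'0
    have h0 : (R - O) * (a*c - b*d) = 0 := by rw [hRval]; linear_combination -h
    exact (mul_eq_zero.mp h0).resolve_right n3
  -- the inverse point m
  set M := EuclideanGeometry.inversion O r R with hM_def
  have hmkey : (M - O) * conj (R - O) = (r:ℂ)^2 := by
    have hMO : M - O = ((r / dist R O)^2 : ℝ) • (R - O) := by
      rw [hM_def, EuclideanGeometry.inversion]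
      rw [vadd_eq_add, vsub_eq_sub]
      ring
    rw [hMO, Complex.real_smul, mul_assoc, Complex.mul_conj]
    rw [← Complex.ofReal_mul, ← Complex.ofReal_pow]
    norm_cast
    rw [Complex.dist_eq, div_pow, Complex.sq_norm]
    have hnsq : Complex.normSq (R - O) ≠ 0 := (Complex.normSq_pos.mpr hR'0).ne'
    field_simp
  have hmkey' : conj (M - O) * (R - O) = (r:ℂ)^2 := by
    have := congrArg (starRingEnd ℂ) hmkey
    simpa using this
  have hm1 : (M - O) * (a + c - b - d) = a*c - b*d := by
    refine mul_left_cancel₀ hr2 ?_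
    linear_combination (a*c - b*d) * hmkey - (M - O) * hconjR
  have hm2 : conj (M - O) * (b*d*(a+c) - a*c*(b+d)) = (r:ℂ)^2*(b*d - a*c) := by
    linear_combination (b*d - a*c) * hmkey' + conj (M - O) * hRval
  -- assemble the four circles
  have mkCosph : ∀ (X Y Z : ℂ), (∃ ω : ℂ, ‖(X - O) - ω‖ = ‖(Y - O) - ω‖ ∧
      ‖(Z - O) - ω‖ = ‖(Y - O) - ω‖ ∧
      ‖(M - O) - ω‖ = ‖(Y - O) - ω‖) →
      Cospherical ({X, Y, Z, M} : Set ℂ) := by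
    intro X Y Z ⟨ω, e1, e2, e3⟩
    refine ⟨O + ω, ‖(Y - O) - ω‖, ?_⟩
    intro x hx
    simp only [Set.mem_insert_iff, Set.mem_singleton_iff] at hx
    have key : ∀ x : ℂ, dist x (O + ω) = ‖(x - O) - ω‖ := by
      intro x; rw [Complex.dist_eq, sub_add_eq_sub_sub]
    rcases hx with rfl | rfl | rfl | rfl
    · rw [key]; exact e1
    · rw [key]
    · rw [key]; exact e2
    · rw [key]; exact e3
  refine ⟨?_, ?_, ?_, ?_⟩
  · -- circle P A D : (u,v,w,z) = (a,b,c,d)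
    apply mkCosph P A D
    obtain ⟨ω, g1, g2, g3⟩ := circle4' r a b c d (P - O) (M - O) hr ha hb hc hd
      n1 hsum_ne (by intro h; exact hden3 (by linear_combination h))
      hp1 hp2 hm1 hm2
    exact ⟨ω, g1, g2, g3⟩
  · -- circle P B C : (u,v,w,z) = (b,a,d,c)
    apply mkCosph P B C
    obtain ⟨ω, g1, g2, g3⟩ := circle4' r b a d c (P - O) (M - O) hr hb ha hd hc
      (by intro h; exact n1 (by linear_combination h))
      (by intro h; exact hsum_ne (by linear_combination -h))
      (by intro h; exact hden3 (by linear_combination -h))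
      (by linear_combination hp1) (by linear_combination hp2)
      (by linear_combination -hm1) (by linear_combination -hm2)
    exact ⟨ω, g1, g2, g3⟩
  · -- circle Q A B : (u,v,w,z) = (a,d,c,b)
    apply mkCosph Q A B
    obtain ⟨ω, g1, g2, g3⟩ := circle4' r a d c b (Q - O) (M - O) hr ha hd hc hb
      (by intro h; exact n2 (by linear_combination h))
      (by intro h; exact hsum_ne (by linear_combination h))
      (by intro h; exact hden3 (by linear_combination h))
      (by linear_combination hq1) (by linear_combination hq2)
      (by linear_combination hm1) (by linear_combination hm2)
    exact ⟨ω, g1, g2, g3⟩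
  · -- circle Q C D : (u,v,w,z) = (c,b,a,d)
    apply mkCosph Q C D
    obtain ⟨ω, g1, g2, g3⟩ := circle4' r c b a d (Q - O) (M - O) hr hc hb ha hd
      (by intro h; exact n2 (by linear_combination -h))
      (by intro h; exact hsum_ne (by linear_combination h))
      (by intro h; exact hden3 (by linear_combination h))
      (by linear_combination -hq1) (by linear_combination -hq2)
      (by linear_combination hm1) (by linear_combination hm2)
    exact ⟨ω, g1, g2, g3⟩
end
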